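/- Let Q[M,L] = ℚ[x1,x2,x3,d1,d2,d3,L] be the polynomial ring in seven variables over ℚ, with the action of the symmetric group S3 defined on generators by σ(x_i) = x_{σ(i)}, σ(d_i) = d_{σ(i)}, σ(L) = L, and let Sym Q[M,L] be the subring of polynomials invariant under this action. Let I_C be the ideal of Q[M,L] generated by p1, p2, p3. Then the ideal I_C ∩ Sym Q[M,L] of the ring Sym Q[M,L] is finitely generated: the seven polynomials p̃2, p̃3, p̃4, p̃5, p̃6, p̃7, p̃8 belong to it and generate it as an ideal of Sym Q[M,L]. -/

import Mathlib

open MvPolynomial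

noncomputable section

/-- Variables: `0,1,2 ↦ x₁,x₂,x₃`, `3,4,5 ↦ d₁,d₂,d₃`, `6 ↦ L`. -/
abbrev CuboidRing : Type := MvPolynomial (Fin 7) ℚ

/-- The permutation of the seven variables induced by `σ ∈ S₃`:
it permutes the `x`-variables and the `d`-variables simultaneously and fixes `L`. -/
def liftPerm (σ : Equiv.Perm (Fin 3)) : Fin 7 → Fin 7 :=
  ![⟨σ 0, by have := (σ 0).isLt; omega⟩, ⟨σ 1, by have := (σ 1).isLt; omega⟩,
    ⟨σ 2, by have := (σ 2).isLt; omega⟩,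
    ⟨(σ 0 : ℕ) + 3, by have := (σ 0).isLt; omega⟩,
    ⟨(σ 1 : ℕ) + 3, by have := (σ 1).isLt; omega⟩,
    ⟨(σ 2 : ℕ) + 3, by have := (σ 2).isLt; omega⟩, ⟨6, by omega⟩]

/-- The subring of multisymmetric polynomials, i.e. polynomials invariant under the
simultaneous `S₃`-permutation of the `x`- and `d`-variables. -/
def SymQML : Subring CuboidRing where
  carrier := {p | ∀ σ : Equiv.Perm (Fin 3), rename (liftPerm σ) p = p}
  zero_mem' := fun σ => map_zero _
  one_mem' := fun σ => map_one _
  add_mem' := fun {a b} ha hb σ => by rw [map_add, ha σ, hb σ]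
  mul_mem' := fun {a b} ha hb σ => by rw [map_mul, ha σ, hb σ]
  neg_mem' := fun {a} ha σ => by rw [map_neg, ha σ]

def pc1 : CuboidRing := X 1 ^ 2 + X 2 ^ 2 - X 3 ^ 2
def pc2 : CuboidRing := X 2 ^ 2 + X 0 ^ 2 - X 4 ^ 2
def pc3 : CuboidRing := X 0 ^ 2 + X 1 ^ 2 - X 5 ^ 2

/-- The seven multisymmetric polynomials `p̃₂, …, p̃₈`. -/
def tpC : Fin 7 → CuboidRing :=
  ![pc1 + pc2 + pc3,
    X 3 * pc1 + X 4 * pc2 + X 5 * pc3,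
    X 0 * pc1 + X 1 * pc2 + X 2 * pc3,
    X 0 * X 3 * pc1 + X 1 * X 4 * pc2 + X 2 * X 5 * pc3,
    X 0 ^ 2 * pc1 + X 1 ^ 2 * pc2 + X 2 ^ 2 * pc3,
    X 3 ^ 2 * pc1 + X 4 ^ 2 * pc2 + X 5 ^ 2 * pc3,
    X 0 ^ 2 * X 3 ^ 2 * pc1 + X 1 ^ 2 * X 4 ^ 2 * pc2 + X 2 ^ 2 * X 5 ^ 2 * pc3]

/-- The Euler cuboid ideal `I_C = ⟨p₁, p₂, p₃⟩`. -/
def IC : Ideal CuboidRing := Ideal.span {pc1, pc2, pc3}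

/-- The ideal `I_C ∩ Sym ℚ[M,L]` of the ring `Sym ℚ[M,L]`,
realized as the pullback of `I_C` along the inclusion of the subring of
multisymmetric polynomials. -/
def ICsym : Ideal SymQML := IC.comap SymQML.subtype

def xv (i : Fin 3) : CuboidRing := X ⟨i, by omega⟩
def dv (i : Fin 3) : CuboidRing := X ⟨(i : ℕ) + 3, by omega⟩
def pcv (i : Fin 3) : CuboidRing := (∑ j, xv j ^ 2) - xv i ^ 2 - dv i ^ 2

lemma rename_xv (σ : Equiv.Perm (Fin 3)) (i : Fin 3) :
    rename (liftPerm σ) (xv i) = xv (σ i) := by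
  simp only [xv, rename_X]
  congr 1
  fin_cases i <;> rfl

lemma rename_dv (σ : Equiv.Perm (Fin 3)) (i : Fin 3) :
    rename (liftPerm σ) (dv i) = dv (σ i) := by
  simp only [dv, rename_X]
  congr 1
  fin_cases i <;> rfl

lemma rename_pcv (σ : Equiv.Perm (Fin 3)) (i : Fin 3) :
    rename (liftPerm σ) (pcv i) = pcv (σ i) := by
  simp only [pcv, map_sub, map_sum, map_pow, rename_xv, rename_dv]
  congr 2
  exact Equiv.sum_comp σ (fun j => xv j ^ 2)
def muv : Fin 7 → Fin 3 → CuboidRing :=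
  ![fun _ => 1, fun i => dv i, fun i => xv i, fun i => xv i * dv i,
    fun i => xv i ^ 2, fun i => dv i ^ 2, fun i => xv i ^ 2 * dv i ^ 2]

lemma rename_muv (σ : Equiv.Perm (Fin 3)) (k : Fin 7) (i : Fin 3) :
    rename (liftPerm σ) (muv k i) = muv k (σ i) := by
  fin_cases k
  · show rename _ (1 : CuboidRing) = 1; simp
  · show rename _ (dv i) = dv (σ i); rw [rename_dv]
  · show rename _ (xv i) = xv (σ i); rw [rename_xv]
  · show rename _ (xv i * dv i) = xv (σ i) * dv (σ i); rw [map_mul, rename_xv, rename_dv]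
  · show rename _ (xv i ^ 2) = xv (σ i) ^ 2; rw [map_pow, rename_xv]
  · show rename _ (dv i ^ 2) = dv (σ i) ^ 2; rw [map_pow, rename_dv]
  · show rename _ (xv i ^ 2 * dv i ^ 2) = xv (σ i) ^ 2 * dv (σ i) ^ 2
    rw [map_mul, map_pow, map_pow, rename_xv, rename_dv]

lemma xv_zero : xv 0 = X 0 := rfl
lemma xv_one : xv 1 = X 1 := rfl
lemma xv_two : xv 2 = X 2 := rfl
lemma dv_zero : dv 0 = X 3 := rfl
lemma dv_one : dv 1 = X 4 := rfl
lemma dv_two : dv 2 = X 5 := rfl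

lemma pcv_zero : pcv 0 = pc1 := by
  simp only [pcv, Fin.sum_univ_three, xv_zero, xv_one, xv_two, dv_zero, pc1]; ring
lemma pcv_one : pcv 1 = pc2 := by
  simp only [pcv, Fin.sum_univ_three, xv_zero, xv_one, xv_two, dv_one, pc2]; ring
lemma pcv_two : pcv 2 = pc3 := by
  simp only [pcv, Fin.sum_univ_three, xv_zero, xv_one, xv_two, dv_two, pc3]; ring

lemma tpC_eq (k : Fin 7) : tpC k = ∑ i, muv k i * pcv i := by
  have h : ∀ k' : Fin 7, (∑ i, muv k' i * pcv i) = muv k' 0 * pcv 0 + muv k' 1 * pcv 1 + muv k' 2 * pcv 2 :=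
    fun k' => Fin.sum_univ_three _
  fin_cases k <;> rw [h] <;> clear h
  · show pc1 + pc2 + pc3 = 1 * pcv 0 + 1 * pcv 1 + 1 * pcv 2
    rw [pcv_zero, pcv_one, pcv_two]; ring
  · show X 3 * pc1 + X 4 * pc2 + X 5 * pc3 = dv 0 * pcv 0 + dv 1 * pcv 1 + dv 2 * pcv 2
    rw [pcv_zero, pcv_one, pcv_two, dv_zero, dv_one, dv_two]
  · show X 0 * pc1 + X 1 * pc2 + X 2 * pc3 = xv 0 * pcv 0 + xv 1 * pcv 1 + xv 2 * pcv 2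
    rw [pcv_zero, pcv_one, pcv_two, xv_zero, xv_one, xv_two]
  · show X 0 * X 3 * pc1 + X 1 * X 4 * pc2 + X 2 * X 5 * pc3 =
      xv 0 * dv 0 * pcv 0 + xv 1 * dv 1 * pcv 1 + xv 2 * dv 2 * pcv 2
    rw [pcv_zero, pcv_one, pcv_two, xv_zero, xv_one, xv_two, dv_zero, dv_one, dv_two]
  · show X 0 ^ 2 * pc1 + X 1 ^ 2 * pc2 + X 2 ^ 2 * pc3 =
      xv 0 ^ 2 * pcv 0 + xv 1 ^ 2 * pcv 1 + xv 2 ^ 2 * pcv 2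
    rw [pcv_zero, pcv_one, pcv_two, xv_zero, xv_one, xv_two]
  · show X 3 ^ 2 * pc1 + X 4 ^ 2 * pc2 + X 5 ^ 2 * pc3 =
      dv 0 ^ 2 * pcv 0 + dv 1 ^ 2 * pcv 1 + dv 2 ^ 2 * pcv 2
    rw [pcv_zero, pcv_one, pcv_two, dv_zero, dv_one, dv_two]
  · show X 0 ^ 2 * X 3 ^ 2 * pc1 + X 1 ^ 2 * X 4 ^ 2 * pc2 + X 2 ^ 2 * X 5 ^ 2 * pc3 =
      xv 0 ^ 2 * dv 0 ^ 2 * pcv 0 + xv 1 ^ 2 * dv 1 ^ 2 * pcv 1 + xv 2 ^ 2 * dv 2 ^ 2 * pcv 2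
    rw [pcv_zero, pcv_one, pcv_two, xv_zero, xv_one, xv_two, dv_zero, dv_one, dv_two]

lemma tpC_mem_Sym (k : Fin 7) : tpC k ∈ SymQML := by
  intro σ
  rw [tpC_eq, map_sum]
  have : ∀ i, rename (liftPerm σ) (muv k i * pcv i) = muv k (σ i) * pcv (σ i) := by
    intro i; rw [map_mul, rename_muv, rename_pcv]
  simp only [this]
  rw [← tpC_eq]
  exact (Equiv.sum_comp σ (fun i => muv k i * pcv i)).trans (tpC_eq k).symm
lemma C_mem_Sym (q : ℚ) : C q ∈ SymQML := fun σ => rename_C _ q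

lemma L_mem_Sym : (X 6 : CuboidRing) ∈ SymQML := fun σ => by
  rw [rename_X]; rfl

lemma sum_mem_Sym (f : Fin 3 → CuboidRing)
    (hf : ∀ σ : Equiv.Perm (Fin 3), ∀ i, rename (liftPerm σ) (f i) = f (σ i)) :
    (∑ i, f i) ∈ SymQML := by
  intro σ
  rw [map_sum]
  simp only [hf]
  exact Equiv.sum_comp σ f

def sx1 : CuboidRing := ∑ i, xv i
def sx2 : CuboidRing := ∑ i, xv i ^ 2
def sx3 : CuboidRing := ∑ i, xv i ^ 3
def sd1 : CuboidRing := ∑ i, dv i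
def sd2 : CuboidRing := ∑ i, dv i ^ 2
def sd3 : CuboidRing := ∑ i, dv i ^ 3
def sm11 : CuboidRing := ∑ i, xv i * dv i
def sp21 : CuboidRing := ∑ i, xv i ^ 2 * dv i
def sp12 : CuboidRing := ∑ i, xv i * dv i ^ 2

lemma sx1_mem : sx1 ∈ SymQML := sum_mem_Sym _ (fun σ i => rename_xv σ i)
lemma sx2_mem : sx2 ∈ SymQML := sum_mem_Sym _ (fun σ i => by rw [map_pow, rename_xv])
lemma sx3_mem : sx3 ∈ SymQML := sum_mem_Sym _ (fun σ i => by rw [map_pow, rename_xv])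
lemma sd1_mem : sd1 ∈ SymQML := sum_mem_Sym _ (fun σ i => rename_dv σ i)
lemma sd2_mem : sd2 ∈ SymQML := sum_mem_Sym _ (fun σ i => by rw [map_pow, rename_dv])
lemma sd3_mem : sd3 ∈ SymQML := sum_mem_Sym _ (fun σ i => by rw [map_pow, rename_dv])
lemma sm11_mem : sm11 ∈ SymQML := sum_mem_Sym _ (fun σ i => by rw [map_mul, rename_xv, rename_dv])
lemma sp21_mem : sp21 ∈ SymQML :=
  sum_mem_Sym _ (fun σ i => by rw [map_mul, map_pow, rename_xv, rename_dv])
lemma sp12_mem : sp12 ∈ SymQML :=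
  sum_mem_Sym _ (fun σ i => by rw [map_mul, map_pow, rename_xv, rename_dv])

/-- The `SymQML`-submodule of `CuboidRing` generated by `1, d₁, x₁, x₁d₁, x₁², d₁², x₁²d₁²`. -/
def W0 : Submodule SymQML CuboidRing := Submodule.span SymQML (Set.range (fun k => muv k 0))

lemma gen_mem (k : Fin 7) : muv k 0 ∈ W0 := Submodule.subset_span ⟨k, rfl⟩

lemma symMul_mem {s w : CuboidRing} (hs : s ∈ SymQML) (hw : w ∈ W0) : s * w ∈ W0 :=
  W0.smul_mem ⟨s, hs⟩ hw

lemma W0_cancel {w : CuboidRing} (n : ℚ) (hn : n ≠ 0) (h : C n * w ∈ W0) : w ∈ W0 := by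
  have : w = C n⁻¹ * (C n * w) := by
    rw [← mul_assoc, ← C_mul, inv_mul_cancel₀ hn, C_1, one_mul]
  rw [this]
  exact symMul_mem (C_mem_Sym _) h

-- membership of generators written explicitly
lemma one_mem_W0 : (1 : CuboidRing) ∈ W0 := gen_mem 0
lemma d_mem_W0 : dv 0 ∈ W0 := gen_mem 1
lemma x_mem_W0 : xv 0 ∈ W0 := gen_mem 2
lemma xd_mem_W0 : xv 0 * dv 0 ∈ W0 := gen_mem 3
lemma x2_mem_W0 : xv 0 ^ 2 ∈ W0 := gen_mem 4
lemma d2_mem_W0 : dv 0 ^ 2 ∈ W0 := gen_mem 5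
lemma x2d2_mem_W0 : xv 0 ^ 2 * dv 0 ^ 2 ∈ W0 := gen_mem 6
lemma two_mem_Sym : (2 : CuboidRing) ∈ SymQML := fun _ => map_ofNat _ 2
lemma three_mem_Sym : (3 : CuboidRing) ∈ SymQML := fun _ => map_ofNat _ 3
lemma six_mem_Sym : (6 : CuboidRing) ∈ SymQML := fun _ => map_ofNat _ 6

lemma W0_half {w : CuboidRing} (h : 2 * w ∈ W0) : w ∈ W0 := by
  apply W0_cancel 2 (by norm_num)
  rwa [show (C (2:ℚ) : CuboidRing) = 2 from map_ofNat _ 2]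

lemma W0_sixth {w : CuboidRing} (h : 6 * w ∈ W0) : w ∈ W0 := by
  apply W0_cancel 6 (by norm_num)
  rwa [show (C (6:ℚ) : CuboidRing) = 6 from map_ofNat _ 6]

lemma mem_x2d : xv 0 ^ 2 * dv 0 ∈ W0 := by
  apply W0_sixth
  have h : (6 : CuboidRing) * (xv 0 ^ 2 * dv 0) =
      (2*sp21 - 2*sx1*sm11 + (sx1^2 - sx2)*sd1) * 1 + (2*sm11 - 2*sx1*sd1) * xv 0
      - (sx1^2 - sx2) * dv 0 + (4*sx1) * (xv 0 * dv 0) + (2*sd1) * xv 0 ^ 2 := by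
    simp only [sp21, sm11, sx1, sx2, sd1, Fin.sum_univ_three]; ring
  rw [h]
  refine add_mem (add_mem (sub_mem (add_mem ?_ ?_) ?_) ?_) ?_ <;>
    apply symMul_mem
  · exact add_mem (sub_mem (mul_mem two_mem_Sym sp21_mem)
      (mul_mem (mul_mem two_mem_Sym sx1_mem) sm11_mem))
      (mul_mem (sub_mem (pow_mem sx1_mem 2) sx2_mem) sd1_mem)
  · exact one_mem_W0
  · exact sub_mem (mul_mem two_mem_Sym sm11_mem) (mul_mem (mul_mem two_mem_Sym sx1_mem) sd1_mem)
  · exact x_mem_W0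
  · exact sub_mem (pow_mem sx1_mem 2) sx2_mem
  · exact d_mem_W0
  · exact mul_mem (fun _ => map_ofNat _ 4) sx1_mem
  · exact xd_mem_W0
  · exact mul_mem two_mem_Sym sd1_mem
  · exact x2_mem_W0

lemma mem_xd2 : xv 0 * dv 0 ^ 2 ∈ W0 := by
  apply W0_sixth
  have h : (6 : CuboidRing) * (xv 0 * dv 0 ^ 2) =
      (2*sp12 - 2*sd1*sm11 + (sd1^2 - sd2)*sx1) * 1 + (2*sm11 - 2*sd1*sx1) * dv 0
      - (sd1^2 - sd2) * xv 0 + (4*sd1) * (xv 0 * dv 0) + (2*sx1) * dv 0 ^ 2 := by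
    simp only [sp12, sm11, sx1, sd1, sd2, Fin.sum_univ_three]; ring
  rw [h]
  refine add_mem (add_mem (sub_mem (add_mem ?_ ?_) ?_) ?_) ?_ <;>
    apply symMul_mem
  · exact add_mem (sub_mem (mul_mem two_mem_Sym sp12_mem)
      (mul_mem (mul_mem two_mem_Sym sd1_mem) sm11_mem))
      (mul_mem (sub_mem (pow_mem sd1_mem 2) sd2_mem) sx1_mem)
  · exact one_mem_W0
  · exact sub_mem (mul_mem two_mem_Sym sm11_mem) (mul_mem (mul_mem two_mem_Sym sd1_mem) sx1_mem)
  · exact d_mem_W0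
  · exact sub_mem (pow_mem sd1_mem 2) sd2_mem
  · exact x_mem_W0
  · exact mul_mem (fun _ => map_ofNat _ 4) sd1_mem
  · exact xd_mem_W0
  · exact mul_mem two_mem_Sym sx1_mem
  · exact d2_mem_W0

lemma mem_x3 : xv 0 ^ 3 ∈ W0 := by
  apply W0_sixth
  have h : (6 : CuboidRing) * xv 0 ^ 3 =
      (6*sx1) * xv 0 ^ 2 - (3*sx1^2 - 3*sx2) * xv 0 + (sx1^3 - 3*sx1*sx2 + 2*sx3) * 1 := by
    simp only [sx1, sx2, sx3, Fin.sum_univ_three]; ring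
  rw [h]
  refine add_mem (sub_mem ?_ ?_) ?_ <;> apply symMul_mem
  · exact mul_mem six_mem_Sym sx1_mem
  · exact x2_mem_W0
  · exact sub_mem (mul_mem three_mem_Sym (pow_mem sx1_mem 2)) (mul_mem three_mem_Sym sx2_mem)
  · exact x_mem_W0
  · exact add_mem (sub_mem (pow_mem sx1_mem 3) (mul_mem (mul_mem three_mem_Sym sx1_mem) sx2_mem))
      (mul_mem two_mem_Sym sx3_mem)
  · exact one_mem_W0

lemma mem_d3 : dv 0 ^ 3 ∈ W0 := by
  apply W0_sixth
  have h : (6 : CuboidRing) * dv 0 ^ 3 =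
      (6*sd1) * dv 0 ^ 2 - (3*sd1^2 - 3*sd2) * dv 0 + (sd1^3 - 3*sd1*sd2 + 2*sd3) * 1 := by
    simp only [sd1, sd2, sd3, Fin.sum_univ_three]; ring
  rw [h]
  refine add_mem (sub_mem ?_ ?_) ?_ <;> apply symMul_mem
  · exact mul_mem six_mem_Sym sd1_mem
  · exact d2_mem_W0
  · exact sub_mem (mul_mem three_mem_Sym (pow_mem sd1_mem 2)) (mul_mem three_mem_Sym sd2_mem)
  · exact d_mem_W0
  · exact add_mem (sub_mem (pow_mem sd1_mem 3) (mul_mem (mul_mem three_mem_Sym sd1_mem) sd2_mem))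
      (mul_mem two_mem_Sym sd3_mem)
  · exact one_mem_W0

lemma mem_x3d2 : xv 0 ^ 3 * dv 0 ^ 2 ∈ W0 := by
  apply W0_sixth
  have h : (6 : CuboidRing) * (xv 0 ^ 3 * dv 0 ^ 2) =
      (6*sx1) * (xv 0 ^ 2 * dv 0 ^ 2) - (3*sx1^2 - 3*sx2) * (xv 0 * dv 0 ^ 2)
      + (sx1^3 - 3*sx1*sx2 + 2*sx3) * dv 0 ^ 2 := by
    simp only [sx1, sx2, sx3, Fin.sum_univ_three]; ring
  rw [h]
  refine add_mem (sub_mem ?_ ?_) ?_ <;> apply symMul_mem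
  · exact mul_mem six_mem_Sym sx1_mem
  · exact x2d2_mem_W0
  · exact sub_mem (mul_mem three_mem_Sym (pow_mem sx1_mem 2)) (mul_mem three_mem_Sym sx2_mem)
  · exact mem_xd2
  · exact add_mem (sub_mem (pow_mem sx1_mem 3) (mul_mem (mul_mem three_mem_Sym sx1_mem) sx2_mem))
      (mul_mem two_mem_Sym sx3_mem)
  · exact d2_mem_W0

lemma mem_x2d3 : xv 0 ^ 2 * dv 0 ^ 3 ∈ W0 := by
  apply W0_sixth
  have h : (6 : CuboidRing) * (xv 0 ^ 2 * dv 0 ^ 3) =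
      (6*sd1) * (xv 0 ^ 2 * dv 0 ^ 2) - (3*sd1^2 - 3*sd2) * (xv 0 ^ 2 * dv 0)
      + (sd1^3 - 3*sd1*sd2 + 2*sd3) * xv 0 ^ 2 := by
    simp only [sd1, sd2, sd3, Fin.sum_univ_three]; ring
  rw [h]
  refine add_mem (sub_mem ?_ ?_) ?_ <;> apply symMul_mem
  · exact mul_mem six_mem_Sym sd1_mem
  · exact x2d2_mem_W0
  · exact sub_mem (mul_mem three_mem_Sym (pow_mem sd1_mem 2)) (mul_mem three_mem_Sym sd2_mem)
  · exact mem_x2d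
  · exact add_mem (sub_mem (pow_mem sd1_mem 3) (mul_mem (mul_mem three_mem_Sym sd1_mem) sd2_mem))
      (mul_mem two_mem_Sym sd3_mem)
  · exact x2_mem_W0
lemma X0_mul_W0 {w : CuboidRing} (hw : w ∈ W0) : xv 0 * w ∈ W0 := by
  induction hw using Submodule.span_induction with
  | mem y hy =>
    obtain ⟨k, rfl⟩ := hy
    fin_cases k
    · show xv 0 * 1 ∈ W0; rw [mul_one]; exact x_mem_W0
    · show xv 0 * dv 0 ∈ W0; exact xd_mem_W0
    · show xv 0 * xv 0 ∈ W0; rw [← pow_two]; exact x2_mem_W0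
    · show xv 0 * (xv 0 * dv 0) ∈ W0
      rw [show xv 0 * (xv 0 * dv 0) = xv 0 ^ 2 * dv 0 by ring]; exact mem_x2d
    · show xv 0 * xv 0 ^ 2 ∈ W0
      rw [show xv 0 * xv 0 ^ 2 = xv 0 ^ 3 by ring]; exact mem_x3
    · show xv 0 * dv 0 ^ 2 ∈ W0; exact mem_xd2
    · show xv 0 * (xv 0 ^ 2 * dv 0 ^ 2) ∈ W0
      rw [show xv 0 * (xv 0 ^ 2 * dv 0 ^ 2) = xv 0 ^ 3 * dv 0 ^ 2 by ring]; exact mem_x3d2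
  | zero => rw [mul_zero]; exact W0.zero_mem
  | add y z _ _ hy hz => rw [mul_add]; exact add_mem hy hz
  | smul s y _ hy =>
    rw [show xv 0 * (s • y) = s • (xv 0 * y) from mul_left_comm _ _ _]
    exact W0.smul_mem s hy

lemma X3_mul_W0 {w : CuboidRing} (hw : w ∈ W0) : dv 0 * w ∈ W0 := by
  induction hw using Submodule.span_induction with
  | mem y hy =>
    obtain ⟨k, rfl⟩ := hy
    fin_cases k
    · show dv 0 * 1 ∈ W0; rw [mul_one]; exact d_mem_W0
    · show dv 0 * dv 0 ∈ W0; rw [← pow_two]; exact d2_mem_W0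
    · show dv 0 * xv 0 ∈ W0; rw [mul_comm]; exact xd_mem_W0
    · show dv 0 * (xv 0 * dv 0) ∈ W0
      rw [show dv 0 * (xv 0 * dv 0) = xv 0 * dv 0 ^ 2 by ring]; exact mem_xd2
    · show dv 0 * xv 0 ^ 2 ∈ W0
      rw [show dv 0 * xv 0 ^ 2 = xv 0 ^ 2 * dv 0 by ring]; exact mem_x2d
    · show dv 0 * dv 0 ^ 2 ∈ W0
      rw [show dv 0 * dv 0 ^ 2 = dv 0 ^ 3 by ring]; exact mem_d3
    · show dv 0 * (xv 0 ^ 2 * dv 0 ^ 2) ∈ W0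
      rw [show dv 0 * (xv 0 ^ 2 * dv 0 ^ 2) = xv 0 ^ 2 * dv 0 ^ 3 by ring]; exact mem_x2d3
  | zero => rw [mul_zero]; exact W0.zero_mem
  | add y z _ _ hy hz => rw [mul_add]; exact add_mem hy hz
  | smul s y _ hy =>
    rw [show dv 0 * (s • y) = s • (dv 0 * y) from mul_left_comm _ _ _]
    exact W0.smul_mem s hy

lemma X0_pow_mul_W0 {w : CuboidRing} (n : ℕ) (hw : w ∈ W0) : xv 0 ^ n * w ∈ W0 := by
  induction n with
  | zero => rwa [pow_zero, one_mul]
  | succ n ih =>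
    rw [show xv 0 ^ (n+1) * w = xv 0 * (xv 0 ^ n * w) by ring]
    exact X0_mul_W0 ih

lemma X3_pow_mul_W0 {w : CuboidRing} (n : ℕ) (hw : w ∈ W0) : dv 0 ^ n * w ∈ W0 := by
  induction n with
  | zero => rwa [pow_zero, one_mul]
  | succ n ih =>
    rw [show dv 0 ^ (n+1) * w = dv 0 * (dv 0 ^ n * w) by ring]
    exact X3_mul_W0 ih
lemma sB_mul {w : CuboidRing} (hw : w ∈ W0) : (xv 1 + xv 2) * w ∈ W0 := by
  have e : (xv 1 + xv 2) * w = sx1 * w - xv 0 * w := by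
    simp only [sx1, Fin.sum_univ_three]; ring
  rw [e]; exact sub_mem (symMul_mem sx1_mem hw) (X0_mul_W0 hw)

lemma tB_mul {w : CuboidRing} (hw : w ∈ W0) : (dv 1 + dv 2) * w ∈ W0 := by
  have e : (dv 1 + dv 2) * w = sd1 * w - dv 0 * w := by
    simp only [sd1, Fin.sum_univ_three]; ring
  rw [e]; exact sub_mem (symMul_mem sd1_mem hw) (X3_mul_W0 hw)

lemma pB_mul {w : CuboidRing} (hw : w ∈ W0) : (xv 1 * xv 2) * w ∈ W0 := by
  apply W0_half
  have e : 2 * ((xv 1 * xv 2) * w) =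
      (sx1^2 - sx2) * w - 2 * (xv 0 * (sx1 * w)) + 2 * (xv 0 * (xv 0 * w)) := by
    simp only [sx1, sx2, Fin.sum_univ_three]; ring
  rw [e]
  exact add_mem (sub_mem (symMul_mem (sub_mem (pow_mem sx1_mem 2) sx2_mem) hw)
    (symMul_mem two_mem_Sym (X0_mul_W0 (symMul_mem sx1_mem hw))))
    (symMul_mem two_mem_Sym (X0_mul_W0 (X0_mul_W0 hw)))

lemma qB_mul {w : CuboidRing} (hw : w ∈ W0) : (dv 1 * dv 2) * w ∈ W0 := by
  apply W0_half
  have e : 2 * ((dv 1 * dv 2) * w) =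
      (sd1^2 - sd2) * w - 2 * (dv 0 * (sd1 * w)) + 2 * (dv 0 * (dv 0 * w)) := by
    simp only [sd1, sd2, Fin.sum_univ_three]; ring
  rw [e]
  exact add_mem (sub_mem (symMul_mem (sub_mem (pow_mem sd1_mem 2) sd2_mem) hw)
    (symMul_mem two_mem_Sym (X3_mul_W0 (symMul_mem sd1_mem hw))))
    (symMul_mem two_mem_Sym (X3_mul_W0 (X3_mul_W0 hw)))

def hA (i k : ℕ) : CuboidRing := xv 1 ^ i * dv 1 ^ k + xv 2 ^ i * dv 2 ^ k
def hB (i k : ℕ) : CuboidRing := xv 1 ^ i * dv 2 ^ k + xv 2 ^ i * dv 1 ^ k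

lemma base00 : (2 : CuboidRing) ∈ W0 := by
  rw [show (2 : CuboidRing) = 2 * 1 by ring]; exact symMul_mem two_mem_Sym one_mem_W0

lemma baseS : xv 1 + xv 2 ∈ W0 := by
  have e : xv 1 + xv 2 = sx1 * 1 - xv 0 := by simp only [sx1, Fin.sum_univ_three]; ring
  rw [e]; exact sub_mem (symMul_mem sx1_mem one_mem_W0) x_mem_W0

lemma baseT : dv 1 + dv 2 ∈ W0 := by
  have e : dv 1 + dv 2 = sd1 * 1 - dv 0 := by simp only [sd1, Fin.sum_univ_three]; ring
  rw [e]; exact sub_mem (symMul_mem sd1_mem one_mem_W0) d_mem_W0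

lemma baseM : xv 1 * dv 1 + xv 2 * dv 2 ∈ W0 := by
  have e : xv 1 * dv 1 + xv 2 * dv 2 = sm11 * 1 - xv 0 * dv 0 := by
    simp only [sm11, Fin.sum_univ_three]; ring
  rw [e]; exact sub_mem (symMul_mem sm11_mem one_mem_W0) xd_mem_W0

lemma baseM' : xv 1 * dv 2 + xv 2 * dv 1 ∈ W0 := by
  have e : xv 1 * dv 2 + xv 2 * dv 1 =
      (sx1 * sd1 - sm11) * 1 - sx1 * dv 0 - sd1 * xv 0 + 2 * (xv 0 * dv 0) := by
    simp only [sx1, sd1, sm11, Fin.sum_univ_three]; ring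
  rw [e]
  exact add_mem (sub_mem (sub_mem (symMul_mem (sub_mem (mul_mem sx1_mem sd1_mem) sm11_mem)
    one_mem_W0) (symMul_mem sx1_mem d_mem_W0)) (symMul_mem sd1_mem x_mem_W0))
    (symMul_mem two_mem_Sym xd_mem_W0)

lemma hAB_mem_aux : ∀ n i k, i + k ≤ n → hA i k ∈ W0 ∧ hB i k ∈ W0 := by
  intro n
  induction n with
  | zero =>
    intro i k h
    have hi : i = 0 := by omega
    have hk : k = 0 := by omega
    subst hi; subst hk
    exact ⟨by rw [show hA 0 0 = 2 by unfold hA; ring]; exact base00,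
           by rw [show hB 0 0 = 2 by unfold hB; ring]; exact base00⟩
  | succ n ih =>
    intro i k h
    match i, k with
    | 0, 0 =>
      exact ⟨by rw [show hA 0 0 = 2 by unfold hA; ring]; exact base00,
             by rw [show hB 0 0 = 2 by unfold hB; ring]; exact base00⟩
    | 1, 0 =>
      exact ⟨by rw [show hA 1 0 = xv 1 + xv 2 by unfold hA; ring]; exact baseS,
             by rw [show hB 1 0 = xv 1 + xv 2 by unfold hB; ring]; exact baseS⟩
    | 0, 1 =>
      exact ⟨by rw [show hA 0 1 = dv 1 + dv 2 by unfold hA; ring]; exact baseT,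
             by rw [show hB 0 1 = dv 1 + dv 2 by unfold hB; ring]; exact baseT⟩
    | 1, 1 =>
      exact ⟨by rw [show hA 1 1 = xv 1 * dv 1 + xv 2 * dv 2 by unfold hA; ring]; exact baseM,
             by rw [show hB 1 1 = xv 1 * dv 2 + xv 2 * dv 1 by unfold hB; ring]; exact baseM'⟩
    | 0, k+2 =>
      have h1 := ih 0 (k+1) (by omega)
      have h2 := ih 0 k (by omega)
      constructor
      · rw [show hA 0 (k+2) = (dv 1 + dv 2) * hA 0 (k+1) - (dv 1 * dv 2) * hA 0 k by
          unfold hA; ring]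
        exact sub_mem (tB_mul h1.1) (qB_mul h2.1)
      · rw [show hB 0 (k+2) = (dv 1 + dv 2) * hB 0 (k+1) - (dv 1 * dv 2) * hB 0 k by
          unfold hB; ring]
        exact sub_mem (tB_mul h1.2) (qB_mul h2.2)
    | 1, k+2 =>
      have h1 := ih 1 (k+1) (by omega)
      have h2 := ih 1 k (by omega)
      constructor
      · rw [show hA 1 (k+2) = (dv 1 + dv 2) * hA 1 (k+1) - (dv 1 * dv 2) * hA 1 k by
          unfold hA; ring]
        exact sub_mem (tB_mul h1.1) (qB_mul h2.1)
      · rw [show hB 1 (k+2) = (dv 1 + dv 2) * hB 1 (k+1) - (dv 1 * dv 2) * hB 1 k by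
          unfold hB; ring]
        exact sub_mem (tB_mul h1.2) (qB_mul h2.2)
    | i+2, k =>
      have h1 := ih (i+1) k (by omega)
      have h2 := ih i k (by omega)
      constructor
      · rw [show hA (i+2) k = (xv 1 + xv 2) * hA (i+1) k - (xv 1 * xv 2) * hA i k by
          unfold hA; ring]
        exact sub_mem (sB_mul h1.1) (pB_mul h2.1)
      · rw [show hB (i+2) k = (xv 1 + xv 2) * hB (i+1) k - (xv 1 * xv 2) * hB i k by
          unfold hB; ring]
        exact sub_mem (sB_mul h1.2) (pB_mul h2.2)

lemma hA_mem (i k : ℕ) : hA i k ∈ W0 := (hAB_mem_aux (i+k) i k le_rfl).1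
lemma hB_mem (i k : ℕ) : hB i k ∈ W0 := (hAB_mem_aux (i+k) i k le_rfl).2
def gG (i j k l : ℕ) : CuboidRing :=
  xv 1 ^ i * xv 2 ^ j * dv 1 ^ k * dv 2 ^ l + xv 2 ^ i * xv 1 ^ j * dv 2 ^ k * dv 1 ^ l

lemma gG_mem_aux : ∀ n i j k l, i + j + k + l ≤ n → gG i j k l ∈ W0 := by
  intro n
  induction n with
  | zero =>
    intro i j k l h
    have : i = 0 ∧ j = 0 ∧ k = 0 ∧ l = 0 := by omega
    obtain ⟨rfl, rfl, rfl, rfl⟩ := this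
    rw [show gG 0 0 0 0 = hA 0 0 by unfold gG hA; ring]
    exact hA_mem 0 0
  | succ n ih =>
    intro i j k l h
    match i, j, k, l with
    | i+1, j+1, k, l =>
      rw [show gG (i+1) (j+1) k l = (xv 1 * xv 2) * gG i j k l by unfold gG; ring]
      exact pB_mul (ih i j k l (by omega))
    | i, j, k+1, l+1 =>
      rw [show gG i j (k+1) (l+1) = (dv 1 * dv 2) * gG i j k l by unfold gG; ring]
      exact qB_mul (ih i j k l (by omega))
    | i, 0, k, 0 =>
      rw [show gG i 0 k 0 = hA i k by unfold gG hA; ring]; exact hA_mem i k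
    | i, 0, 0, l =>
      rw [show gG i 0 0 l = hB i l by unfold gG hB; ring]; exact hB_mem i l
    | 0, j, k, 0 =>
      rw [show gG 0 j k 0 = hB j k by unfold gG hB; ring]; exact hB_mem j k
    | 0, j, 0, l =>
      rw [show gG 0 j 0 l = hA j l by unfold gG hA; ring]; exact hA_mem j l

lemma gG_mem (i j k l : ℕ) : gG i j k l ∈ W0 := gG_mem_aux (i+j+k+l) i j k l le_rfl

lemma sw_zero : (Equiv.swap (1 : Fin 3) 2) 0 = 0 := by decide
lemma sw_one : (Equiv.swap (1 : Fin 3) 2) 1 = 2 := by decide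
lemma sw_two : (Equiv.swap (1 : Fin 3) 2) 2 = 1 := by decide

lemma monomial_expand (u : Fin 7 →₀ ℕ) (a : ℚ) :
    (monomial u) a = C a *
      (xv 0 ^ u 0 * xv 1 ^ u 1 * xv 2 ^ u 2 * dv 0 ^ u 3 * dv 1 ^ u 4 * dv 2 ^ u 5
        * X 6 ^ u 6) := by
  rw [monomial_eq, Finsupp.prod_fintype _ _ (fun i => pow_zero _), Fin.prod_univ_seven]
  rw [xv_zero, xv_one, xv_two, dv_zero, dv_one, dv_two]

lemma sym_monomial_mem (u : Fin 7 →₀ ℕ) (a : ℚ) :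
    (monomial u) a + rename (liftPerm (Equiv.swap 1 2)) ((monomial u) a) ∈ W0 := by
  have hr : rename (liftPerm (Equiv.swap 1 2)) ((monomial u) a)
      = C a * (xv 0 ^ u 0 * xv 2 ^ u 1 * xv 1 ^ u 2 * dv 0 ^ u 3 * dv 2 ^ u 4 * dv 1 ^ u 5
        * X 6 ^ u 6) := by
    rw [monomial_expand, map_mul, rename_C]
    simp only [map_mul, map_pow, rename_xv, rename_dv, sw_zero, sw_one, sw_two,
      L_mem_Sym (Equiv.swap 1 2)]
  rw [hr, monomial_expand]
  have e : C a * (xv 0 ^ u 0 * xv 1 ^ u 1 * xv 2 ^ u 2 * dv 0 ^ u 3 * dv 1 ^ u 4 * dv 2 ^ u 5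
        * X 6 ^ u 6)
      + C a * (xv 0 ^ u 0 * xv 2 ^ u 1 * xv 1 ^ u 2 * dv 0 ^ u 3 * dv 2 ^ u 4 * dv 1 ^ u 5
        * X 6 ^ u 6)
      = C a * (X 6 ^ u 6 * (xv 0 ^ u 0 * (dv 0 ^ u 3 * gG (u 1) (u 2) (u 4) (u 5)))) := by
    unfold gG; ring
  rw [e]
  exact symMul_mem (C_mem_Sym a) (symMul_mem (pow_mem L_mem_Sym (u 6))
    (X0_pow_mul_W0 _ (X3_pow_mul_W0 _ (gG_mem _ _ _ _))))

lemma sym2_mem (p : CuboidRing) :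
    p + rename (liftPerm (Equiv.swap 1 2)) p ∈ W0 := by
  induction p using MvPolynomial.induction_on' with
  | monomial u a => exact sym_monomial_mem u a
  | add p q hp hq =>
    rw [map_add, show p + q + (rename (liftPerm (Equiv.swap 1 2)) p
      + rename (liftPerm (Equiv.swap 1 2)) q)
      = (p + rename (liftPerm (Equiv.swap 1 2)) p)
        + (q + rename (liftPerm (Equiv.swap 1 2)) q) by ring]
    exact add_mem hp hq

lemma mem_W0_of_invariant {p : CuboidRing}
    (hp : rename (liftPerm (Equiv.swap 1 2)) p = p) : p ∈ W0 := by
  have h := sym2_mem p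
  rw [hp, ← two_mul] at h
  exact W0_half h
lemma liftPerm_comp : ∀ σ τ : Equiv.Perm (Fin 3),
    liftPerm τ ∘ liftPerm σ = liftPerm (τ * σ) := by decide

lemma rename_comp (σ τ : Equiv.Perm (Fin 3)) (p : CuboidRing) :
    rename (liftPerm τ) (rename (liftPerm σ) p) = rename (liftPerm (τ * σ)) p := by
  rw [rename_rename, liftPerm_comp σ τ]

lemma IC_rep {z : CuboidRing} (hz : z ∈ IC) : ∃ a : Fin 3 → CuboidRing, z = ∑ i, a i * pcv i := by
  rw [IC, show ({pc1, pc2, pc3} : Set CuboidRing) = insert pc1 (insert pc2 {pc3}) from rfl,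
    Ideal.mem_span_insert] at hz
  obtain ⟨a1, z1, hz1, rfl⟩ := hz
  rw [Ideal.mem_span_insert] at hz1
  obtain ⟨a2, z2, hz2, rfl⟩ := hz1
  rw [Ideal.mem_span_singleton'] at hz2
  obtain ⟨a3, rfl⟩ := hz2
  refine ⟨![a1, a2, a3], ?_⟩
  rw [Fin.sum_univ_three, pcv_zero, pcv_one, pcv_two]
  show a1 * pc1 + (a2 * pc2 + a3 * pc3) = a1 * pc1 + a2 * pc2 + a3 * pc3
  ring

lemma tpC_mem_IC (k : Fin 7) : tpC k ∈ IC := by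
  rw [tpC_eq]
  refine Ideal.sum_mem _ (fun i _ => Ideal.mul_mem_left _ _ ?_)
  fin_cases i
  · rw [show pcv ⟨0, by omega⟩ = pc1 from pcv_zero]
    exact Ideal.subset_span (by simp [IC])
  · rw [show pcv ⟨1, by omega⟩ = pc2 from pcv_one]
    exact Ideal.subset_span (by simp [IC])
  · rw [show pcv ⟨2, by omega⟩ = pc3 from pcv_two]
    exact Ideal.subset_span (by simp [IC])

def sig : Fin 3 → Equiv.Perm (Fin 3) := ![1, Equiv.swap 0 1, Equiv.swap 0 2]

lemma sig_zero : ∀ i, sig i 0 = i := by decide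

/-- The key fact: a multisymmetric element of `I_C` is a `SymQML`-combination of the `tpC`s. -/
lemma main_rep (z : SymQML) (hz : (z : CuboidRing) ∈ IC) :
    ∃ c : Fin 7 → SymQML, (z : CuboidRing) = ∑ k, (c k : CuboidRing) * tpC k := by
  obtain ⟨a, ha⟩ := IC_rep hz
  set b : Fin 3 → CuboidRing :=
    fun i => C ((6:ℚ)⁻¹) * ∑ σ : Equiv.Perm (Fin 3), rename (liftPerm σ) (a (σ⁻¹ i)) with hbdef
  have hb_equiv : ∀ (τ : Equiv.Perm (Fin 3)) (i : Fin 3),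
      rename (liftPerm τ) (b i) = b (τ i) := by
    intro τ i
    rw [hbdef]
    simp only
    rw [map_mul, rename_C, map_sum]
    congr 1
    refine Fintype.sum_equiv (Equiv.mulLeft τ) _ _ ?_
    intro σ
    rw [rename_comp]
    simp only [Equiv.coe_mulLeft, mul_inv_rev, Equiv.Perm.mul_apply, Equiv.Perm.inv_def, Equiv.symm_apply_apply]
  -- Reynolds: z = ∑ i, b i * pcv i
  have key1 : ∀ σ : Equiv.Perm (Fin 3),
      (∑ i, rename (liftPerm σ) (a (σ⁻¹ i)) * pcv i) = (z : CuboidRing) := by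
    intro σ
    have e1 : (∑ j, rename (liftPerm σ) (a j) * pcv (σ j))
        = ∑ i, rename (liftPerm σ) (a (σ⁻¹ i)) * pcv i := by
      refine Fintype.sum_equiv σ _ _ ?_
      intro j
      simp only [Equiv.Perm.inv_def, Equiv.symm_apply_apply]
    rw [← e1]
    have e2 : ∀ j, rename (liftPerm σ) (a j) * pcv (σ j)
        = rename (liftPerm σ) (a j * pcv j) := by
      intro j; rw [map_mul, rename_pcv]
    simp only [e2]
    rw [← map_sum, ← ha, z.2 σ]
  have hzb : (z : CuboidRing) = ∑ i, b i * pcv i := by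
    have e3 : ∀ i, b i * pcv i
        = C ((6:ℚ)⁻¹) * ∑ σ : Equiv.Perm (Fin 3), rename (liftPerm σ) (a (σ⁻¹ i)) * pcv i := by
      intro i; rw [hbdef]; simp only; rw [mul_assoc, Finset.sum_mul]
    simp only [e3]
    rw [← Finset.mul_sum, Finset.sum_comm]
    simp only [key1]
    rw [Finset.sum_const, Finset.card_univ]
    have hcard : Fintype.card (Equiv.Perm (Fin 3)) = 6 := by
      rw [Fintype.card_perm]; decide
    have h6 : ((6:ℕ) : CuboidRing) = C (6:ℚ) := by
      rw [← map_natCast (C : ℚ →+* CuboidRing) 6, Nat.cast_ofNat]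
    rw [hcard, nsmul_eq_mul, ← mul_assoc, h6, ← C_mul]
    norm_num
  -- b 0 is invariant under the stabilizer of 0
  have hb0 : b 0 ∈ W0 := by
    apply mem_W0_of_invariant
    rw [hb_equiv (Equiv.swap 1 2) 0, sw_zero]
  obtain ⟨c, hc⟩ := (Submodule.mem_span_range_iff_exists_fun _).mp hb0
  refine ⟨c, ?_⟩
  have hbi : ∀ i, b i = ∑ k, (c k : CuboidRing) * muv k i := by
    intro i
    have h1 := congrArg (rename (liftPerm (sig i))) hc
    rw [map_sum, hb_equiv (sig i) 0, sig_zero] at h1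
    rw [← h1]
    refine Finset.sum_congr rfl (fun k _ => ?_)
    rw [show (c k • muv k 0 : CuboidRing) = (c k : CuboidRing) * muv k 0 from rfl,
      map_mul, (c k).2 (sig i), rename_muv, sig_zero]
  rw [hzb]
  calc ∑ i, b i * pcv i
      = ∑ i, ∑ k, (c k : CuboidRing) * (muv k i * pcv i) := by
        refine Finset.sum_congr rfl (fun i _ => ?_)
        rw [hbi i, Finset.sum_mul]
        exact Finset.sum_congr rfl (fun k _ => by rw [mul_assoc])
    _ = ∑ k, (c k : CuboidRing) * ∑ i, muv k i * pcv i := by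
        rw [Finset.sum_comm]
        exact Finset.sum_congr rfl (fun k _ => by rw [Finset.mul_sum])
    _ = ∑ k, (c k : CuboidRing) * tpC k := by
        exact Finset.sum_congr rfl (fun k _ => by rw [← tpC_eq])


theorem ICsym_is_generated_by_the_seven_polynomials :
    (∀ i : Fin 7, tpC i ∈ SymQML) ∧
    ∀ q : Fin 7 → SymQML, (∀ i : Fin 7, (q i : CuboidRing) = tpC i) →
      (∀ i : Fin 7, q i ∈ ICsym) ∧ ICsym = Ideal.span (Set.range q) := by
  refine ⟨tpC_mem_Sym, fun q hq => ?_⟩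
  have hmem : ∀ i : Fin 7, q i ∈ ICsym := by
    intro i
    rw [ICsym, Ideal.mem_comap]
    rw [show SymQML.subtype (q i) = (q i : CuboidRing) from rfl, hq i]
    exact tpC_mem_IC i
  refine ⟨hmem, le_antisymm ?_ ?_⟩
  · intro z hz
    have hz' : (z : CuboidRing) ∈ IC := hz
    obtain ⟨c, hc⟩ := main_rep z hz'
    have hzq : z = ∑ k, c k * q k := by
      apply Subtype.coe_injective
      show (z : CuboidRing) = ((∑ k, c k * q k : SymQML) : CuboidRing)
      rw [AddSubmonoidClass.coe_finset_sum]
      simp only [MulMemClass.coe_mul, hq]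
      exact hc
    rw [hzq]
    exact Ideal.sum_mem _ (fun k _ => Ideal.mul_mem_left _ _ (Ideal.subset_span ⟨k, rfl⟩))
  · rw [Ideal.span_le]
    rintro _ ⟨k, rfl⟩
    exact hmem k
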